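/- Let Q_B : 𝒳 × 𝒟 → 𝒴 ∪ {reject} be the Bayesian reject-option predictor defined by Q_B(x, D) = H_B(x, D) if T(x, D) ≤ ε and Q_B(x, D) = reject otherwise. Then Q_B minimizes the Bayesian expected reject-option risk: for every measurable reject-option predictor Q : 𝒳 × 𝒟 → 𝒴 ∪ {reject} whose loss is μ-integrable, R_L^ε(Q_B) ≤ R_L^ε(Q). -/

import Mathlib

open MeasureTheory ProbabilityTheory ENNReal NNReal

/-- The natural σ-algebra on `Option 𝒴 = 𝒴 ∪ {reject}`: a set is measurable iff its
preimage under `some` is measurable. -/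
instance optionMeasurableSpace {α : Type*} [m : MeasurableSpace α] :
    MeasurableSpace (Option α) := m.map some

/-- The Bayesian reject-option predictor `Q_B(x,D) = H_B(x,D)` if `T(x,D) ≤ ε` and
`reject` (modeled as `none`) otherwise, minimizes the Bayesian expected reject-option risk
`R_L^ε(Q) = ∫ ℓ^ε(y, Q(x,D)) dμ(θ,D,x,y)` among all measurable reject-option
predictors. Here a sample from `μ` is `p = (θ, D, x, y)` with `p.1 = θ`, `p.2.1 = D`,
`p.2.2.1 = x`, `p.2.2.2 = y`, and the Markov kernel `κ` from `𝒳 × 𝒟` to `𝒴` is the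
predictive distribution `p(y | x, D)`, i.e. the pushforward of `μ` onto
`(𝒳 × 𝒟) × 𝒴` is the composition of the `(x,D)`-marginal of `μ` with `κ`. -/
theorem bayesian_reject_option_optimal
    {Θ 𝒟 𝒳 𝒴 : Type*} [MeasurableSpace Θ] [MeasurableSpace 𝒟]
    [MeasurableSpace 𝒳] [MeasurableSpace 𝒴]
    (μ : Measure (Θ × 𝒟 × 𝒳 × 𝒴)) [IsProbabilityMeasure μ]
    (κ : ProbabilityTheory.Kernel (𝒳 × 𝒟) 𝒴) [ProbabilityTheory.IsMarkovKernel κ]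
    (hdis : μ.map (fun p : Θ × 𝒟 × 𝒳 × 𝒴 => ((p.2.2.1, p.2.1), p.2.2.2))
      = (μ.map (fun p : Θ × 𝒟 × 𝒳 × 𝒴 => (p.2.2.1, p.2.1))) ⊗ₘ κ)
    (ℓ : 𝒴 → 𝒴 → ℝ≥0) (hℓ : Measurable (Function.uncurry ℓ))
    (ε : ℝ≥0)
    (HB : 𝒳 × 𝒟 → 𝒴) (hHBm : Measurable HB)
    (hbayes : ∀ (z : 𝒳 × 𝒟) (yh : 𝒴),
      ∫⁻ y, (ℓ y (HB z) : ℝ≥0∞) ∂(κ z) ≤ ∫⁻ y, (ℓ y yh : ℝ≥0∞) ∂(κ z))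
    (T : 𝒳 × 𝒟 → ℝ≥0∞)
    (hT : ∀ z, T z = ∫⁻ y, (ℓ y (HB z) : ℝ≥0∞) ∂(κ z))
    (hTm : Measurable T)
    (R : (𝒳 × 𝒟 → Option 𝒴) → ℝ≥0∞)
    (hR : ∀ Q : 𝒳 × 𝒟 → Option 𝒴,
      R Q = ∫⁻ p : Θ × 𝒟 × 𝒳 × 𝒴,
        (Q (p.2.2.1, p.2.1)).elim (ε : ℝ≥0∞) (fun yh => (ℓ p.2.2.2 yh : ℝ≥0∞)) ∂μ)
    (QB : 𝒳 × 𝒟 → Option 𝒴)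
    (hQB : ∀ z, QB z = if T z ≤ (ε : ℝ≥0∞) then some (HB z) else none)
    (hfin : R QB ≠ ∞) :
    ∀ Q : 𝒳 × 𝒟 → Option 𝒴, Measurable Q → R Q ≠ ∞ → R QB ≤ R Q := by
  intro Q hQm _
  classical
  -- Nonempty 𝒴
  have hne : Nonempty (Θ × 𝒟 × 𝒳 × 𝒴) := by
    by_contra h
    rw [not_nonempty_iff] at h
    have h1 : μ Set.univ = 1 := measure_univ
    rw [Set.univ_eq_empty_iff.mpr h] at h1
    simp at h1
  obtain ⟨⟨_, _, _, y0⟩⟩ := hne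
  -- measurability of the projection maps
  have hg : Measurable (fun p : Θ × 𝒟 × 𝒳 × 𝒴 => ((p.2.2.1, p.2.1), p.2.2.2)) := by
    fun_prop
  have hg' : Measurable (fun p : Θ × 𝒟 × 𝒳 × 𝒴 => (p.2.2.1, p.2.1)) := by fun_prop
  set ν : Measure (𝒳 × 𝒟) := μ.map (fun p : Θ × 𝒟 × 𝒳 × 𝒴 => (p.2.2.1, p.2.1)) with hν
  have : IsProbabilityMeasure ν := Measure.isProbabilityMeasure_map hg'.aemeasurable
  -- measurability facts about Option
  have hnone : MeasurableSet ({none} : Set (Option 𝒴)) := by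
    show MeasurableSet (some ⁻¹' {none})
    have h0 : (some ⁻¹' {none} : Set 𝒴) = ∅ := by ext y; simp
    rw [h0]
    exact MeasurableSet.empty
  have hgetD : Measurable (fun o : Option 𝒴 => o.getD y0) := by
    intro s hs
    show MeasurableSet (some ⁻¹' ((fun o : Option 𝒴 => o.getD y0) ⁻¹' s))
    convert hs using 1
    ext y; simp
  -- main formula: risk as an integral over the (x,D)-marginal
  have main : ∀ P : 𝒳 × 𝒟 → Option 𝒴,
      Measurable (fun q : (𝒳 × 𝒟) × 𝒴 =>
        (P q.1).elim (ε : ℝ≥0∞) (fun yh => (ℓ q.2 yh : ℝ≥0∞))) →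
      R P = ∫⁻ z, (P z).elim (ε : ℝ≥0∞)
          (fun yh => ∫⁻ y, (ℓ y yh : ℝ≥0∞) ∂(κ z)) ∂ν := by
    intro P hF
    rw [hR]
    have h1 : ∫⁻ p : Θ × 𝒟 × 𝒳 × 𝒴,
        (P (p.2.2.1, p.2.1)).elim (ε : ℝ≥0∞) (fun yh => (ℓ p.2.2.2 yh : ℝ≥0∞)) ∂μ
        = ∫⁻ q, (P q.1).elim (ε : ℝ≥0∞) (fun yh => (ℓ q.2 yh : ℝ≥0∞))
            ∂(μ.map (fun p : Θ × 𝒟 × 𝒳 × 𝒴 => ((p.2.2.1, p.2.1), p.2.2.2))) := by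
      rw [lintegral_map hF hg]
    rw [h1, hdis, Measure.lintegral_compProd hF]
    refine lintegral_congr fun z => ?_
    cases hp : P z with
    | none => simp [hp]
    | some yh => simp [hp]
  -- measurability of the QB integrand
  have hFQB : Measurable (fun q : (𝒳 × 𝒟) × 𝒴 =>
      (QB q.1).elim (ε : ℝ≥0∞) (fun yh => (ℓ q.2 yh : ℝ≥0∞))) := by
    have heq : (fun q : (𝒳 × 𝒟) × 𝒴 =>
        (QB q.1).elim (ε : ℝ≥0∞) (fun yh => (ℓ q.2 yh : ℝ≥0∞)))
        = Set.piecewise {q : (𝒳 × 𝒟) × 𝒴 | T q.1 ≤ (ε : ℝ≥0∞)}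
            (fun q => (ℓ q.2 (HB q.1) : ℝ≥0∞)) (fun _ => (ε : ℝ≥0∞)) := by
      funext q
      by_cases h : T q.1 ≤ (ε : ℝ≥0∞) <;> simp [hQB, h]
    rw [heq]
    have hAs : MeasurableSet {q : (𝒳 × 𝒟) × 𝒴 | T q.1 ≤ (ε : ℝ≥0∞)} :=
      measurableSet_le (hTm.comp measurable_fst) measurable_const
    exact Measurable.piecewise hAs
      ((measurable_coe_nnreal_ennreal.comp hℓ).comp
        (measurable_snd.prodMk (hHBm.comp measurable_fst)))
      measurable_const
  -- measurability of the Q integrand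
  have hFQ : Measurable (fun q : (𝒳 × 𝒟) × 𝒴 =>
      (Q q.1).elim (ε : ℝ≥0∞) (fun yh => (ℓ q.2 yh : ℝ≥0∞))) := by
    have heq : (fun q : (𝒳 × 𝒟) × 𝒴 =>
        (Q q.1).elim (ε : ℝ≥0∞) (fun yh => (ℓ q.2 yh : ℝ≥0∞)))
        = Set.piecewise {q : (𝒳 × 𝒟) × 𝒴 | Q q.1 = none}
            (fun _ => (ε : ℝ≥0∞)) (fun q => (ℓ q.2 ((Q q.1).getD y0) : ℝ≥0∞)) := by
      funext q
      by_cases h : Q q.1 = none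
      · simp [h]
      · obtain ⟨yh, hyh⟩ := Option.ne_none_iff_exists'.mp h
        simp [hyh]
    rw [heq]
    have hAs : MeasurableSet {q : (𝒳 × 𝒟) × 𝒴 | Q q.1 = none} :=
      (hQm.comp measurable_fst) hnone
    exact Measurable.piecewise hAs measurable_const
      ((measurable_coe_nnreal_ennreal.comp hℓ).comp
        (measurable_snd.prodMk ((hgetD.comp hQm).comp measurable_fst)))
  rw [main QB hFQB, main Q hFQ]
  refine lintegral_mono fun z => ?_
  by_cases hTe : T z ≤ (ε : ℝ≥0∞)
  · cases hq : Q z with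
    | none => simpa [hQB, hTe, ← hT] using hTe
    | some yh =>
        simp only [hQB, hTe, if_true, Option.elim]
        exact hbayes z yh
  · cases hq : Q z with
    | none => simp [hQB, hTe]
    | some yh =>
        simp only [hQB, hTe, if_false, Option.elim]
        exact le_trans (le_of_not_ge hTe) (by rw [hT]; exact hbayes z yh)
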